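/- Let 𝔽_q be a finite field, n ≥ 1, g(x) ∈ 𝔽_q[x] a monic divisor of x^n − 1, g⊥(x) = (x^n−1)/g(x), and let 𝒞 ⊆ 𝔽_q^n be the cyclic code generated by g. Then the action of the cyclic group C of order n (generated by the cyclic shift c) on 𝒞 ∖ {0} is free — i.e., c^j(w) ≠ w for every nonzero codeword w ∈ 𝒞 and every j with 0 < j < n — if and only if gcd(g⊥(x), x^d − 1) = 1 in 𝔽_q[x] for every proper divisor d of n (i.e., every d with d | n and 1 ≤ d < n). -/

import Mathlib

/-- The (leftward) cyclic shift on words of length `n`: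
`c(w₁,…,wₙ) = (w₂,…,wₙ,w₁)`. -/
def cshift {A : Type*} {n : ℕ} (w : Fin n → A) : Fin n → A :=
  fun i => w ⟨((i : ℕ) + 1) % n, Nat.mod_lt _ i.pos⟩

/-- The major index of a word: `maj w = Σ_{1 ≤ i ≤ n-1, w_i > w_{i+1}} i`
(here positions are 0-indexed, so position `i : Fin n` is the `(i+1)`-st letter). -/
def majIdx {A : Type*} [LinearOrder A] {n : ℕ} (w : Fin n → A) : ℕ :=
  ∑ i : Fin n,
    if h : (i : ℕ) + 1 < n then (if w ⟨(i : ℕ) + 1, h⟩ < w i then (i : ℕ) + 1 else 0) else 0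

/-- The number of cyclic descents of a word, `cdes w = #{i : w_i > w_{i+1}}`
with indices read cyclically (`w_{n+1} := w_1`). -/
def cdes {A : Type*} [LinearOrder A] {n : ℕ} (w : Fin n → A) : ℕ :=
  (Finset.univ.filter fun i : Fin n =>
    w ⟨((i : ℕ) + 1) % n, Nat.mod_lt _ i.pos⟩ < w i).card

/-- The inversion number of a word: `inv w = #{(i,j) : i < j, w_i > w_j}`. -/
def invNum {A : Type*} [LinearOrder A] {n : ℕ} (w : Fin n → A) : ℕ :=
  (Finset.univ.filter fun p : Fin n × Fin n => p.1 < p.2 ∧ w p.2 < w p.1).card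

/-- The Hamming weight of a binary word: the number of ones. -/
def wt {n : ℕ} (w : Fin n → Bool) : ℕ :=
  (Finset.univ.filter fun i => w i = true).card

/-- The triple `(X, Σ_{x ∈ X} t^{stat x}, C)` exhibits the cyclic sieving phenomenon,
where `C` is the cyclic group of order `n` generated by the cyclic shift `c` acting on `X`:
for every `d`, the number of fixed points of `c^d` on `X` equals the evaluation of
`Σ_{x ∈ X} t^{stat x}` at `t = ζ^d`, with `ζ = exp(2πi/n)`. -/
def exhibitsCSP {A : Type*} [DecidableEq A] {n : ℕ} (X : Finset (Fin n → A))
    (stat : (Fin n → A) → ℕ) : Prop :=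
  ∀ d : ℕ,
    ((X.filter fun v => cshift^[d] v = v).card : ℂ) =
      ∑ v ∈ X, Complex.exp (2 * (Real.pi : ℂ) * Complex.I / n) ^ (d * stat v)

/-- The polynomial `w₁ + w₂ x + ⋯ + wₙ x^{n-1}` associated to a word `w ∈ F^n` under
the standard identification of `F^n` with `F[x]/(xⁿ-1)`.  A word `w` belongs to the
cyclic code generated by a monic divisor `g` of `xⁿ - 1` exactly when `g ∣ wordPoly w`. -/
noncomputable def wordPoly {F : Type*} [CommRing F] {n : ℕ} (w : Fin n → F) :
    Polynomial F :=
  ∑ i : Fin n, Polynomial.C (w i) * Polynomial.X ^ (i : ℕ)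

open Polynomial Finset

section Aux

lemma cshift_iterate_apply {A : Type*} {m : ℕ} (w : Fin m → A) (j : ℕ) (i : Fin m) :
    cshift^[j] w i = w ⟨((i : ℕ) + j) % m, Nat.mod_lt _ i.pos⟩ := by
  induction j generalizing w with
  | zero =>
      simp only [Function.iterate_zero, id_eq]
      congr 1
      exact Fin.ext (by simp [Nat.mod_eq_of_lt i.isLt])
  | succ j ih =>
      rw [Function.iterate_succ_apply, ih (cshift w)]
      show w ⟨((((i : ℕ) + j) % m) + 1) % m, _⟩ = _
      congr 1
      exact Fin.ext (by simp [Nat.mod_add_mod, Nat.add_assoc])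

/-- `w` read as an `n`-periodic function on `ℕ`. -/
def wrd {A : Type*} {n : ℕ} (hn : 0 < n) (w : Fin n → A) (m : ℕ) : A :=
  w ⟨m % n, Nat.mod_lt _ hn⟩

lemma wrd_mod {A : Type*} {n : ℕ} (hn : 0 < n) (w : Fin n → A) (m : ℕ) :
    wrd hn w (m % n) = wrd hn w m := by
  unfold wrd
  congr 1
  exact Fin.ext (Nat.mod_mod_of_dvd m dvd_rfl)

lemma fixed_iff {A : Type*} {n : ℕ} (hn : 0 < n) (w : Fin n → A) (j : ℕ) :
    cshift^[j] w = w ↔ ∀ m, wrd hn w (m + j) = wrd hn w m := by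
  constructor
  · intro hfix m
    have h1 : cshift^[j] w ⟨m % n, Nat.mod_lt _ hn⟩ = w ⟨m % n, Nat.mod_lt _ hn⟩ := by
      rw [hfix]
    rw [cshift_iterate_apply] at h1
    unfold wrd
    rw [← h1]
    congr 1
    exact Fin.ext (by simp [Nat.mod_add_mod])
  · intro hper
    funext i
    rw [cshift_iterate_apply]
    have h1 := hper (i : ℕ)
    unfold wrd at h1
    have h2 : w ⟨(i : ℕ) % n, Nat.mod_lt _ hn⟩ = w i := by
      congr 1
      exact Fin.ext (by simp [Nat.mod_eq_of_lt i.isLt])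
    exact h1.trans h2

lemma wrd_add_mul {A : Type*} {n : ℕ} (hn : 0 < n) (w : Fin n → A) {j : ℕ}
    (hper : ∀ m, wrd hn w (m + j) = wrd hn w m) (a m : ℕ) :
    wrd hn w (m + a * j) = wrd hn w m := by
  induction a with
  | zero => simp
  | succ a ih =>
      have : m + (a + 1) * j = (m + a * j) + j := by ring
      rw [this, hper, ih]

lemma wrd_mod_of_per {A : Type*} {n : ℕ} (hn : 0 < n) (w : Fin n → A) {d : ℕ}
    (hper : ∀ m, wrd hn w (m + d) = wrd hn w m) (m : ℕ) :
    wrd hn w m = wrd hn w (m % d) := by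
  conv_lhs => rw [← Nat.mod_add_div' m d]
  exact wrd_add_mul hn w hper (m / d) (m % d)

lemma fix_gcd {A : Type*} {n : ℕ} (hn : 0 < n) (w : Fin n → A) {j : ℕ} (hj : 0 < j)
    (hjn : j < n) (hfix : cshift^[j] w = w) : cshift^[Nat.gcd j n] w = w := by
  set d := Nat.gcd j n with hd
  have hdpos : 0 < d := Nat.gcd_pos_of_pos_left _ hj
  have hdn : d ∣ n := Nat.gcd_dvd_right j n
  have hdj : d ∣ j := Nat.gcd_dvd_left j n
  have hdltn : d < n := lt_of_le_of_lt (Nat.gcd_le_left n hj) hjn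
  rw [fixed_iff hn] at hfix ⊢
  intro m
  have hn' : 1 < n / d := by
    by_contra h
    push_neg at h
    have : n ≤ d := by
      calc n = n / d * d := (Nat.div_mul_cancel hdn).symm
        _ ≤ 1 * d := Nat.mul_le_mul_right d h
        _ = d := one_mul d
    omega
  have hcop : Nat.Coprime (j / d) (n / d) := Nat.coprime_div_gcd_div_gcd hdpos
  obtain ⟨a, -, ha⟩ := Nat.exists_mul_mod_eq_one_of_coprime hcop hn'
  -- ha : (j / d) * a % (n / d) = 1
  have key : (a * j) % n = d % n := by
    have h1 : a * j = (j / d * a) * d := by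
      rw [mul_comm (j / d) a, mul_assoc, Nat.div_mul_cancel hdj]
    have h2 : n = (n / d) * d := (Nat.div_mul_cancel hdn).symm
    rw [h1]
    conv_lhs => rw [h2]
    rw [Nat.mul_mod_mul_right, ha, one_mul, Nat.mod_eq_of_lt hdltn]
  calc wrd hn w (m + d) = wrd hn w ((m + d) % n) := (wrd_mod hn w _).symm
    _ = wrd hn w ((m + a * j) % n) := by
        rw [Nat.add_mod m d n, Nat.add_mod m (a * j) n, key]
    _ = wrd hn w (m + a * j) := wrd_mod hn w _
    _ = wrd hn w m := wrd_add_mul hn w hfix a m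

variable {F : Type*} [Field F]

lemma coeff_sum_CX (f : ℕ → F) (d m : ℕ) :
    (∑ r ∈ range d, C (f r) * X ^ r).coeff m = if m < d then f m else 0 := by
  rw [finset_sum_coeff]
  simp only [coeff_C_mul, coeff_X_pow, mul_ite, mul_one, mul_zero]
  rw [Finset.sum_ite_eq (range d) m f]
  simp [Finset.mem_range]

lemma wordPoly_eq {n d : ℕ} (hd : d ∣ n) (hd1 : 0 < d)
    (f : ℕ → F) (w : Fin n → F) (hw : ∀ i : Fin n, w i = f ((i : ℕ) % d)) :
    wordPoly w = (∑ r ∈ range d, C (f r) * X ^ r) *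
      (∑ k ∈ range (n / d), (X : F[X]) ^ (d * k)) := by
  rw [Finset.sum_mul_sum]
  unfold wordPoly
  have lhs : ∑ i : Fin n, C (w i) * X ^ (i : ℕ)
      = ∑ i ∈ range n, C (f (i % d)) * X ^ i := by
    rw [← Fin.sum_univ_eq_sum_range (fun i => C (f (i % d)) * X ^ i) n]
    exact Finset.sum_congr rfl fun i _ => by rw [hw i]
  rw [lhs, ← Finset.sum_product']
  apply Finset.sum_nbij' (fun i => ((i % d, i / d) : ℕ × ℕ))
    (fun p => p.1 + d * p.2)
  · intro i hi
    rw [Finset.mem_range] at hi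
    rw [Finset.mem_product, Finset.mem_range, Finset.mem_range]
    exact ⟨Nat.mod_lt _ hd1, Nat.div_lt_div_of_lt_of_dvd hd hi⟩
  · intro p hp
    rw [Finset.mem_product, Finset.mem_range, Finset.mem_range] at hp
    rw [Finset.mem_range]
    calc p.1 + d * p.2 < d + d * p.2 := by omega
      _ = d * (p.2 + 1) := by ring
      _ ≤ d * (n / d) := Nat.mul_le_mul_left d hp.2
      _ = n := Nat.mul_div_cancel' hd
  · intro i _
    simp [Nat.mod_add_div]
  · intro p hp
    rw [Finset.mem_product, Finset.mem_range, Finset.mem_range] at hp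
    have h1 : (p.1 + d * p.2) % d = p.1 := by
      rw [Nat.add_mul_mod_self_left, Nat.mod_eq_of_lt hp.1]
    have h2 : (p.1 + d * p.2) / d = p.2 := by
      rw [Nat.add_mul_div_left _ _ hd1, Nat.div_eq_of_lt hp.1, zero_add]
    exact Prod.ext h1 h2
  · intro i _
    have : C (f (i % d)) * X ^ (i % d) * X ^ (d * (i / d))
        = C (f (i % d)) * X ^ (i % d + d * (i / d)) := by
      rw [mul_assoc, ← pow_add]
    rw [this, Nat.mod_add_div]

lemma geom_id {n d : ℕ} (hd : d ∣ n) :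
    (∑ k ∈ range (n / d), (X : F[X]) ^ (d * k)) * (X ^ d - 1) = X ^ n - 1 := by
  have h := geom_sum_mul ((X : F[X]) ^ d) (n / d)
  simpa [← pow_mul, Nat.mul_div_cancel' hd] using h

lemma Xn_sub_one_ne {m : ℕ} (hm : 0 < m) : (X ^ m - 1 : F[X]) ≠ 0 := by
  have : (X ^ m - C 1 : F[X]).Monic := monic_X_pow_sub_C 1 hm.ne'
  simpa using this.ne_zero

lemma natDegree_Xd (d : ℕ) : (X ^ d - 1 : F[X]).natDegree = d := by
  have : (X ^ d - 1 : F[X]) = X ^ d - C 1 := by simp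
  rw [this, natDegree_X_pow_sub_C]

lemma not_coprime_exists {n d : ℕ} (hn : 0 < n) (hd : d ∣ n) (hd1 : 0 < d)
    {g gperp : F[X]} (hg : g * gperp = X ^ n - 1)
    (hnc : ¬ IsCoprime gperp (X ^ d - 1)) :
    ∃ w : Fin n → F, w ≠ 0 ∧ g ∣ wordPoly w ∧ cshift^[d] w = w := by
  classical
  set h := EuclideanDomain.gcd gperp (X ^ d - 1) with hdef
  have hXd : (X ^ d - 1 : F[X]) ≠ 0 := Xn_sub_one_ne hd1
  have hh1 : h ∣ gperp := EuclideanDomain.gcd_dvd_left _ _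
  have hh2 : h ∣ X ^ d - 1 := EuclideanDomain.gcd_dvd_right _ _
  have hhne : h ≠ 0 := fun h0 => hXd (by simpa [h0] using hh2)
  have hhu : ¬ IsUnit h := fun hu => hnc (EuclideanDomain.gcd_isUnit_iff.mp hu)
  obtain ⟨u, hu⟩ := hh2
  obtain ⟨v, hv⟩ := hh1
  have hune : u ≠ 0 := by
    intro h0; rw [h0, mul_zero] at hu; exact hXd hu
  have hdegh : 1 ≤ h.natDegree := by
    by_contra hc
    push_neg at hc
    have : h.natDegree = 0 := by omega
    have := Polynomial.eq_C_of_natDegree_eq_zero this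
    apply hhu
    rw [this]
    refine isUnit_C.mpr (isUnit_iff_ne_zero.mpr ?_)
    intro h0
    apply hhne
    rw [this, h0, map_zero]
  have hdeg : u.natDegree < d := by
    have := natDegree_mul hhne hune
    rw [← hu, natDegree_Xd] at this
    omega
  set s := ∑ k ∈ range (n / d), (X : F[X]) ^ (d * k) with hs
  have hgs : g ∣ u * s := by
    have key : u * s * h = g * v * h := by
      calc u * s * h = s * (h * u) := by ring
        _ = s * (X ^ d - 1) := by rw [← hu]
        _ = X ^ n - 1 := geom_id hd
        _ = g * gperp := hg.symm
        _ = g * v * h := by rw [hv]; ring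
    exact ⟨v, mul_right_cancel₀ hhne key⟩
  refine ⟨fun i => u.coeff ((i : ℕ) % d), ?_, ?_, ?_⟩
  · intro h0
    have hrd : u.natDegree < n := lt_of_lt_of_le hdeg (Nat.le_of_dvd hn hd)
    have := congrFun h0 ⟨u.natDegree, hrd⟩
    simp only [Pi.zero_apply] at this
    rw [Nat.mod_eq_of_lt hdeg] at this
    exact (Polynomial.leadingCoeff_ne_zero.mpr hune) this
  · have hwp := wordPoly_eq hd hd1 u.coeff (fun i : Fin n => u.coeff ((i : ℕ) % d))
      (fun i => rfl)
    rw [hwp]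
    have : (∑ r ∈ range d, C (u.coeff r) * X ^ r) = u := by
      conv_rhs => rw [Polynomial.as_sum_range' u d hdeg]
      exact Finset.sum_congr rfl fun r _ => C_mul_X_pow_eq_monomial
    rw [this]
    exact hgs
  · funext i
    rw [cshift_iterate_apply]
    show u.coeff ((((i : ℕ) + d) % n) % d) = u.coeff ((i : ℕ) % d)
    rw [Nat.mod_mod_of_dvd _ hd, Nat.add_mod_right]

lemma exists_not_coprime {n d : ℕ} (hn : 0 < n) (hd : d ∣ n) (hd1 : 0 < d)
    {g gperp : F[X]} (hg : g * gperp = X ^ n - 1)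
    (w : Fin n → F) (hw0 : w ≠ 0) (hwc : g ∣ wordPoly w)
    (hfix : cshift^[d] w = w) : ¬ IsCoprime gperp (X ^ d - 1) := by
  intro hcop
  have hper : ∀ m, wrd hn w (m + d) = wrd hn w m := (fixed_iff hn w d).mp hfix
  set u := ∑ r ∈ range d, C (wrd hn w r) * X ^ r with hudef
  have hw : ∀ i : Fin n, w i = wrd hn w ((i : ℕ) % d) := by
    intro i
    have h1 : w i = wrd hn w (i : ℕ) := by
      unfold wrd; congr 1; exact Fin.ext (by simp [Nat.mod_eq_of_lt i.isLt])
    rw [h1, wrd_mod_of_per hn w hper]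
  have hwp := wordPoly_eq hd hd1 (wrd hn w) w hw
  have hcoeff : ∀ m, u.coeff m = if m < d then wrd hn w m else 0 :=
    fun m => coeff_sum_CX (wrd hn w) d m
  have hune : u ≠ 0 := by
    obtain ⟨i, hi⟩ := Function.ne_iff.mp hw0
    intro h0
    apply hi
    rw [hw i]
    have := hcoeff ((i : ℕ) % d)
    rw [h0, Polynomial.coeff_zero, if_pos (Nat.mod_lt _ hd1)] at this
    exact this.symm
  have hdeg : u.natDegree < d := by
    rw [Polynomial.natDegree_lt_iff_degree_lt hune]
    apply lt_of_le_of_lt (Polynomial.degree_sum_le _ _)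
    rw [Finset.sup_lt_iff (by exact_mod_cast WithBot.bot_lt_coe d)]
    intro r hr
    exact lt_of_le_of_lt (degree_C_mul_X_pow_le _ _)
      (by exact_mod_cast Finset.mem_range.mp hr)
  obtain ⟨t, ht⟩ := hwc
  have hgne : g ≠ 0 := by
    intro h0
    rw [h0, zero_mul] at hg
    exact Xn_sub_one_ne hn hg.symm
  have key : u * gperp = t * (X ^ d - 1) := by
    apply mul_left_cancel₀ hgne
    calc g * (u * gperp)
        = u * (∑ k ∈ range (n / d), (X : F[X]) ^ (d * k)) * (X ^ d - 1) := by
          rw [mul_assoc u _ _, geom_id hd, ← hg]; ring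
      _ = wordPoly w * (X ^ d - 1) := by rw [← hwp]
      _ = g * (t * (X ^ d - 1)) := by rw [ht]; ring
  have hdvdu : (X ^ d - 1 : F[X]) ∣ u :=
    (hcop.symm).dvd_of_dvd_mul_right ⟨t, by rw [key]; ring⟩
  have := Polynomial.natDegree_le_of_dvd hdvdu hune
  rw [natDegree_Xd] at this
  omega

end Aux

/-- for a cyclic code C ⊆ F_q^n with generator g (a monic divisor of
x^n - 1) and parity check polynomial gperp = (x^n - 1)/g, the action of the cyclic
group of order n on C ∖ {0} is free if and only if gcd(gperp, x^d - 1) = 1 for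
every proper divisor d of n. -/
theorem stmt11 {F : Type*} [Field F] [Fintype F] {n : ℕ} (hn : 1 ≤ n)
    (g : Polynomial F) (hmonic : g.Monic) (hdvd : g ∣ Polynomial.X ^ n - 1)
    (gperp : Polynomial F) (hgperp : g * gperp = Polynomial.X ^ n - 1) :
    (∀ w : Fin n → F, g ∣ wordPoly w → w ≠ 0 →
        ∀ j : ℕ, 0 < j → j < n → cshift^[j] w ≠ w) ↔
      (∀ d : ℕ, d ∣ n → 1 ≤ d → d < n →
        IsCoprime gperp (Polynomial.X ^ d - 1)) := by
  have hn0 : 0 < n := hn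
  constructor
  · intro hfree d hdn hd1 hdlt
    by_contra hnc
    obtain ⟨w, hw0, hwc, hfix⟩ := not_coprime_exists hn0 hdn hd1 hgperp hnc
    exact hfree w hwc hw0 d hd1 hdlt hfix
  · intro hcop w hwc hw0 j hj hjn hfix
    have hdvd' : Nat.gcd j n ∣ n := Nat.gcd_dvd_right j n
    have hdpos : 0 < Nat.gcd j n := Nat.gcd_pos_of_pos_left n hj
    have hdlt : Nat.gcd j n < n := lt_of_le_of_lt (Nat.gcd_le_left n hj) hjn
    exact exists_not_coprime hn0 hdvd' hdpos hgperp w hw0 hwc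
      (fix_gcd hn0 w hj hjn hfix) (hcop _ hdvd' hdpos hdlt)
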